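/- arXiv:2509.02562 — 2 statements merged into one kernel-verified Lean document; each statement's English description precedes it below -/
import Mathlib

section
/- Let y : [0,T) → ℝ be the maximal solution of y^{(d+1)} = 2^d·y·y^{(d)} with y(0) = ⋯ = y^{(d−1)}(0) = 0 and y^{(d)}(0) = 1. Then for every τ ∈ [0,T), sup_{t∈[0,τ]} |f_p(t) − y^{(d)}(t)| → 0 as p → ∞. -/
open MeasureTheory ProbabilityTheory Filter Set


open MeasureTheory ProbabilityTheory Filter

/-- `y` is a solution on `[0,T)` of the generalised Blasius-type Cauchy problem
`y^{(d+1)} = c·y·y^{(d)}`, `y(0) = ⋯ = y^{(d−1)}(0) = 0`, `y^{(d)}(0) = 1`. -/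
def IsBlasiusSolOn (d : ℕ) (c T : ℝ) (y : ℝ → ℝ) : Prop :=
  ContDiffOn ℝ (d + 1) y (Set.Ico 0 T) ∧
  (∀ k < d, iteratedDerivWithin k y (Set.Ico 0 T) 0 = 0) ∧
  iteratedDerivWithin d y (Set.Ico 0 T) 0 = 1 ∧
  ∀ t ∈ Set.Ico (0 : ℝ) T,
    iteratedDerivWithin (d + 1) y (Set.Ico 0 T) t
      = c * y t * iteratedDerivWithin d y (Set.Ico 0 T) t

/-- `y : [0,T)` is *the maximal solution* of the Cauchy problem
`y^{(d+1)} = c·y·y^{(d)}` with the Blasius initial conditions: it is a solution and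
no solution exists on a longer interval, so `T` is the explosion time. -/
def IsMaxBlasiusSol (d : ℕ) (c T : ℝ) (y : ℝ → ℝ) : Prop :=
  0 < T ∧ IsBlasiusSolOn d c T y ∧
    ∀ (T' : ℝ) (z : ℝ → ℝ), IsBlasiusSolOn d c T' z → T' ≤ T

/-- The Picard-type iterates `f_0 = 1`,
`f_{p+1}(t) = exp((2^d/d!)·∫_0^t (t−s)^d·f_p(s) ds)`. -/
noncomputable def blasiusIter (d : ℕ) : ℕ → ℝ → ℝ
  | 0 => fun _ => 1
  | (p + 1) => fun t =>
      Real.exp ((2 ^ d / (d.factorial : ℝ)) *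
        ∫ s in (0 : ℝ)..t, (t - s) ^ d * blasiusIter d p s)

section BlasiusAux
open intervalIntegral

lemma cont_kernel_primitive (d : ℕ) {f : ℝ → ℝ} (hf : Continuous f) :
    Continuous (fun t => ∫ s in (0:ℝ)..t, (t - s) ^ d * f s) := by
  have key : ∀ t : ℝ, (∫ s in (0:ℝ)..t, (t - s) ^ d * f s)
      = ∑ k ∈ Finset.range (d+1),
          (t ^ k * (d.choose k : ℝ)) * ∫ s in (0:ℝ)..t, (-s) ^ (d - k) * f s := by
    intro t
    have h1 : ∀ s : ℝ, (t - s) ^ d * f s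
        = ∑ k ∈ Finset.range (d+1), (t ^ k * (d.choose k : ℝ)) * ((-s) ^ (d - k) * f s) := by
      intro s
      rw [sub_eq_add_neg, add_pow, Finset.sum_mul]
      exact Finset.sum_congr rfl fun k _ => by ring
    simp_rw [h1]
    rw [intervalIntegral.integral_finset_sum]
    · exact Finset.sum_congr rfl fun k _ => intervalIntegral.integral_const_mul _ _
    · intro k _
      exact (continuous_const.mul (((continuous_neg).pow _).mul hf)).intervalIntegrable _ _
  rw [show (fun t => ∫ s in (0:ℝ)..t, (t - s) ^ d * f s)
      = fun t => ∑ k ∈ Finset.range (d+1),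
          (t ^ k * (d.choose k : ℝ)) * ∫ s in (0:ℝ)..t, (-s) ^ (d - k) * f s from funext key]
  refine continuous_finset_sum _ fun k _ => ((continuous_pow k).mul continuous_const).mul ?_
  exact intervalIntegral.continuous_primitive
    (fun a b => (((continuous_neg).pow _).mul hf).intervalIntegrable a b) 0

lemma blasiusIter_continuous (d p : ℕ) : Continuous (blasiusIter d p) := by
  induction p with
  | zero => exact continuous_const
  | succ p ih =>
    exact Real.continuous_exp.comp (continuous_const.mul (cont_kernel_primitive d ih))

lemma one_le_blasiusIter (d p : ℕ) : ∀ t : ℝ, 0 ≤ t → 1 ≤ blasiusIter d p t := by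
  induction p with
  | zero => intro t _; exact le_refl 1
  | succ p ih =>
    intro t ht
    show (1:ℝ) ≤ Real.exp _
    rw [show (1:ℝ) = Real.exp 0 by rw [Real.exp_zero]]
    apply Real.exp_le_exp.2
    have hint : 0 ≤ ∫ s in (0:ℝ)..t, (t - s)^d * blasiusIter d p s :=
      intervalIntegral.integral_nonneg ht (fun s hs =>
        mul_nonneg (pow_nonneg (by linarith [hs.2]) d)
          (le_trans zero_le_one (ih s hs.1)))
    positivity

end BlasiusAux

set_option maxHeartbeats 1000000 in
/-- If `y : [0,T)` is the maximal solution of `y^{(d+1)} = 2^d·y·y^{(d)}`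
with the Blasius initial conditions, then for every `τ ∈ [0,T)`,
`sup_{t∈[0,τ]} |f_p(t) − y^{(d)}(t)| → 0` as `p → ∞`. -/
theorem blasiusIter_tendstoUniformly (d : ℕ) (hd : 1 ≤ d)
    (T : ℝ) (y : ℝ → ℝ) (hy : IsMaxBlasiusSol d (2 ^ d) T y) :
    ∀ τ ∈ Set.Ico (0 : ℝ) T,
      TendstoUniformlyOn (fun p => blasiusIter d p)
        (fun t => iteratedDerivWithin d y (Set.Ico 0 T) t) atTop (Set.Icc 0 τ) := by
  intro τ hτ
  obtain ⟨hτ0, hτT⟩ := hτ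
  obtain ⟨hT, hsol, -⟩ := hy
  obtain ⟨hreg, hinit, hinit1, hODE⟩ := hsol
  set c : ℝ := 2 ^ d with hc2'
  have hc0 : 0 < c := by positivity
  have hc2 : c = 2 ^ d := rfl
  set S : Set ℝ := Set.Ico (0:ℝ) T with hS
  have hUD : UniqueDiffOn ℝ S := uniqueDiffOn_Ico 0 T
  have hcont : ∀ k, k ≤ d + 1 → ContinuousOn (iteratedDerivWithin k y S) S := by
    intro k hk
    exact hreg.continuousOn_iteratedDerivWithin (by exact_mod_cast hk) hUD
  have hdiff : ∀ k, k ≤ d → ∀ t ∈ S, HasDerivWithinAt (iteratedDerivWithin k y S)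
      (iteratedDerivWithin (k+1) y S t) S t := by
    intro k hk t ht
    have h1 : DifferentiableOn ℝ (iteratedDerivWithin k y S) S :=
      hreg.differentiableOn_iteratedDerivWithin (by exact_mod_cast Nat.lt_succ_of_le hk) hUD
    have h2 := (h1 t ht).hasDerivWithinAt
    rwa [← iteratedDerivWithin_succ] at h2
  have hdiffAt : ∀ k, k ≤ d → ∀ t ∈ Set.Ioo (0:ℝ) T, HasDerivAt (iteratedDerivWithin k y S)
      (iteratedDerivWithin (k+1) y S t) t := by
    intro k hk t ht
    exact (hdiff k hk t ⟨le_of_lt ht.1, ht.2⟩).hasDerivAt (Ico_mem_nhds ht.1 ht.2)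
  have hycont : ContinuousOn y S := by
    have := hcont 0 (by omega); rwa [iteratedDerivWithin_zero] at this
  set g : ℝ → ℝ := iteratedDerivWithin d y S with hg
  have hgderiv : ∀ t ∈ S, HasDerivWithinAt g (c * y t * g t) S t := by
    intro t ht
    have h := hdiff d le_rfl t ht
    rwa [hODE t ht] at h
  have hgdAt : ∀ t ∈ Set.Ioo (0:ℝ) T, HasDerivAt g (c * y t * g t) t := by
    intro t ht
    have h := hdiffAt d le_rfl t ht
    rwa [hODE t ⟨le_of_lt ht.1, ht.2⟩] at h
  have hgcont : ContinuousOn g S := hcont d (by omega)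
  -- the exponential formula
  have hIccS : ∀ t ∈ S, Set.Icc (0:ℝ) t ⊆ S := fun t ht x hx => ⟨hx.1, lt_of_le_of_lt hx.2 ht.2⟩
  have hyint : ∀ t ∈ S, IntervalIntegrable y volume 0 t := by
    intro t ht
    exact (hycont.mono (hIccS t ht)).intervalIntegrable_of_Icc ht.1
  have hgexp : ∀ t ∈ S, g t = Real.exp (c * ∫ s in (0:ℝ)..t, y s) := by
    intro t ht
    set Y : ℝ → ℝ := fun u => ∫ s in (0:ℝ)..u, y s with hY
    have hYcont : ContinuousOn Y (Set.Icc 0 t) := by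
      have h1 : IntegrableOn y (Set.uIcc 0 t) volume := by
        rw [Set.uIcc_of_le ht.1]
        exact (hycont.mono (hIccS t ht)).integrableOn_Icc
      simpa [Set.uIcc_of_le ht.1] using intervalIntegral.continuousOn_primitive_interval h1
    have hYd : ∀ x ∈ Set.Ioo (0:ℝ) t, HasDerivAt Y (y x) x := by
      intro x hx
      have hxS : x ∈ Set.Ioo (0:ℝ) T := ⟨hx.1, lt_of_lt_of_le hx.2 (le_of_lt ht.2)⟩
      have hca : ContinuousAt y x :=
        (hycont.mono (Set.Ioo_subset_Ico_self)).continuousAt (Ioo_mem_nhds hxS.1 hxS.2)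
      have hsm : StronglyMeasurableAtFilter y (nhds x) volume :=
        ⟨Set.Ioo 0 T, Ioo_mem_nhds hxS.1 hxS.2,
          (hycont.mono Set.Ioo_subset_Ico_self).aestronglyMeasurable measurableSet_Ioo⟩
      exact intervalIntegral.integral_hasDerivAt_right
        (hyint x ⟨le_of_lt hx.1, hxS.2⟩) hsm hca
    set u : ℝ → ℝ := fun x => g x * Real.exp (-c * Y x) with hu
    have hucont : ContinuousOn u (Set.Icc 0 t) := by
      exact (hgcont.mono (hIccS t ht)).mul
        ((Real.continuous_exp.comp_continuousOn (hYcont.const_smul (-c))))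
    have hud : ∀ x ∈ Set.Ioo (0:ℝ) t, HasDerivAt u 0 x := by
      intro x hx
      have hxS : x ∈ Set.Ioo (0:ℝ) T := ⟨hx.1, lt_of_lt_of_le hx.2 (le_of_lt ht.2)⟩
      have hE : HasDerivAt (fun s => Real.exp (-c * Y s))
          (Real.exp (-c * Y x) * (-c * y x)) x := ((hYd x hx).const_mul (-c)).exp
      have h := (hgdAt x hxS).mul hE
      exact h.congr_deriv (by ring)
    have hftc := intervalIntegral.integral_eq_sub_of_hasDeriv_right_of_le ht.1 hucont
      (fun x hx => (hud x hx).hasDerivWithinAt)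
      (intervalIntegrable_const (c := (0:ℝ)))
    rw [intervalIntegral.integral_zero] at hftc
    have hu0 : u 0 = 1 := by
      simp only [hu, hY]
      rw [intervalIntegral.integral_same, mul_zero, Real.exp_zero, mul_one]
      exact hinit1
    have hut : u t = 1 := by linarith [hftc, hu0]
    have hut' : g t * Real.exp (-c * Y t) = 1 := hut
    have hexp : Real.exp (-c * Y t) = (Real.exp (c * Y t))⁻¹ := by
      rw [← Real.exp_neg]; ring_nf
    rw [hexp] at hut'
    field_simp at hut'
    linarith [hut']
  -- FTC for iterated derivatives on [0,t]
  have hftcD : ∀ k, k ≤ d → ∀ t ∈ S,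
      (∫ s in (0:ℝ)..t, iteratedDerivWithin (k+1) y S s)
        = iteratedDerivWithin k y S t - iteratedDerivWithin k y S 0 := by
    intro k hk t ht
    refine intervalIntegral.integral_eq_sub_of_hasDeriv_right_of_le ht.1
      ((hcont k (by omega)).mono (hIccS t ht))
      (fun x hx => (hdiffAt k hk x ⟨hx.1, lt_of_lt_of_le hx.2 (le_of_lt ht.2)⟩).hasDerivWithinAt)
      (((hcont (k+1) (by omega)).mono (hIccS t ht)).intervalIntegrable_of_Icc ht.1)
  -- nonnegativity of the iterated derivatives
  have hDpos : ∀ m, m ≤ d → ∀ t ∈ S, 0 ≤ iteratedDerivWithin (d - m) y S t := by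
    intro m
    induction m with
    | zero =>
      intro _ t ht
      simp only [Nat.sub_zero]
      rw [show iteratedDerivWithin d y S t = g t from rfl, hgexp t ht]
      positivity
    | succ m ih =>
      intro hm t ht
      have hk1 : d - (m+1) + 1 = d - m := by omega
      have h0 : iteratedDerivWithin (d - (m+1)) y S 0 = 0 := hinit _ (by omega)
      have h := hftcD (d - (m+1)) (by omega) t ht
      rw [h0, sub_zero, hk1] at h
      rw [← h]
      exact intervalIntegral.integral_nonneg ht.1
        (fun s hs => ih (by omega) s (hIccS t ht hs))
  have hy0 : ∀ t ∈ S, 0 ≤ y t := by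
    intro t ht
    have := hDpos d le_rfl t ht
    rwa [Nat.sub_self, iteratedDerivWithin_zero] at this
  -- kernel identity
  have hker : ∀ t ∈ S, ∀ j, j ≤ d →
      (∫ s in (0:ℝ)..t, ((t - s)^j / (j.factorial : ℝ)) * iteratedDerivWithin j y S s)
        = ∫ s in (0:ℝ)..t, y s := by
    intro t ht j
    induction j with
    | zero =>
      intro _
      simp [iteratedDerivWithin_zero]
    | succ j ih =>
      intro hj
      have ihe := ih (by omega)
      set A : ℝ → ℝ := fun s => ((t - s)^j / (j.factorial : ℝ)) * iteratedDerivWithin j y S s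
        with hA
      set B : ℝ → ℝ := fun s =>
        ((t - s)^(j+1) / ((j+1).factorial : ℝ)) * iteratedDerivWithin (j+1) y S s with hB
      set w : ℝ → ℝ := fun s =>
        -((t - s)^(j+1) / ((j+1).factorial : ℝ)) * iteratedDerivWithin j y S s with hw
      have hAint : IntervalIntegrable A volume 0 t := by
        apply ContinuousOn.intervalIntegrable_of_Icc ht.1
        exact (((continuous_const.sub continuous_id).pow j).continuousOn.div_const _).mul
          ((hcont j (by omega)).mono (hIccS t ht))
      have hBint : IntervalIntegrable B volume 0 t := by
        apply ContinuousOn.intervalIntegrable_of_Icc ht.1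
        exact (((continuous_const.sub continuous_id).pow (j+1)).continuousOn.div_const _).mul
          ((hcont (j+1) (by omega)).mono (hIccS t ht))
      have hwcont : ContinuousOn w (Set.Icc 0 t) := by
        exact ((((continuous_const.sub continuous_id).pow (j+1)).continuousOn.div_const
          _).neg).mul ((hcont j (by omega)).mono (hIccS t ht))
      have hfact : (((j+1).factorial : ℕ) : ℝ) = (j+1 : ℝ) * (j.factorial : ℝ) := by
        rw [Nat.factorial_succ]; push_cast; ring
      have hwd : ∀ x ∈ Set.Ioo (0:ℝ) t, HasDerivAt w (A x - B x) x := by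
        intro x hx
        have hxS : x ∈ Set.Ioo (0:ℝ) T := ⟨hx.1, lt_of_lt_of_le hx.2 (le_of_lt ht.2)⟩
        have hpow : HasDerivAt (fun s : ℝ => -((t - s)^(j+1) / ((j+1).factorial : ℝ)))
            ((t - x)^j / (j.factorial : ℝ)) x := by
          have h1 : HasDerivAt (fun s : ℝ => t - s) (-1) x := by
            simpa using (hasDerivAt_id x).const_sub t
          have h2 := (h1.pow (j+1)).div_const ((j+1).factorial : ℝ)
          have h3 := h2.neg
          refine h3.congr_deriv ?_
          have hfne : (j.factorial : ℝ) ≠ 0 := Nat.cast_ne_zero.2 (Nat.factorial_ne_zero j)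
          rw [hfact, Nat.add_sub_cancel]
          push_cast
          field_simp
        have hD := hdiffAt j (by omega) x hxS
        have h := hpow.mul hD
        refine h.congr_deriv ?_
        simp only [hA, hB]
        ring
      have hftc := intervalIntegral.integral_eq_sub_of_hasDeriv_right_of_le ht.1 hwcont
        (fun x hx => (hwd x hx).hasDerivWithinAt) (hAint.sub hBint)
      have hwt : w t = 0 := by
        simp [hw]
      have hw0 : w 0 = 0 := by
        simp [hw, hinit j (by omega)]
      rw [hwt, hw0, sub_zero, intervalIntegral.integral_sub hAint hBint] at hftc
      have : (∫ s in (0:ℝ)..t, B s) = ∫ s in (0:ℝ)..t, A s := by linarith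
      rw [hB] at this
      rw [this, ← hA, ihe]
  -- fixed point equation
  have hfix : ∀ t ∈ S, g t
      = Real.exp ((c / (d.factorial : ℝ)) * ∫ s in (0:ℝ)..t, (t - s)^d * g s) := by
    intro t ht
    rw [hgexp t ht, ← hker t ht d le_rfl]
    congr 1
    have hrw : (fun s => ((t - s)^d / (d.factorial : ℝ)) * iteratedDerivWithin d y S s)
        = fun s => ((d.factorial : ℝ))⁻¹ * ((t - s)^d * g s) := by
      funext s; rw [hg]; ring
    rw [hrw, intervalIntegral.integral_const_mul]
    ring
  -- monotonicity bound: g t ≤ g τ =: M on [0, τ]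
  have hτS : τ ∈ S := ⟨hτ0, hτT⟩
  have hIccτ : Set.Icc (0:ℝ) τ ⊆ S := hIccS τ hτS
  set M : ℝ := g τ with hM
  have hYmono : ∀ t ∈ Set.Icc (0:ℝ) τ,
      (∫ s in (0:ℝ)..t, y s) ≤ ∫ s in (0:ℝ)..τ, y s := by
    intro t htτ
    have h1 : IntervalIntegrable y volume 0 t := hyint t (hIccτ htτ)
    have h2 : IntervalIntegrable y volume t τ := by
      apply ContinuousOn.intervalIntegrable_of_Icc htτ.2
      exact hycont.mono (fun x hx => ⟨le_trans htτ.1 hx.1, lt_of_le_of_lt hx.2 hτT⟩)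
    have hadd := intervalIntegral.integral_add_adjacent_intervals h1 h2
    have hnn : 0 ≤ ∫ s in t..τ, y s :=
      intervalIntegral.integral_nonneg htτ.2
        (fun s hs => hy0 s ⟨le_trans htτ.1 hs.1, lt_of_le_of_lt hs.2 hτT⟩)
    linarith
  have hgM : ∀ t ∈ Set.Icc (0:ℝ) τ, g t ≤ M := by
    intro t htτ
    rw [hgexp t (hIccτ htτ), hM, hgexp τ hτS]
    exact Real.exp_le_exp.2 (mul_le_mul_of_nonneg_left (hYmono t htτ) (le_of_lt hc0))
  have hg1 : ∀ t ∈ Set.Icc (0:ℝ) τ, 1 ≤ g t := by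
    intro t htτ
    rw [hgexp t (hIccτ htτ)]
    have : 0 ≤ ∫ s in (0:ℝ)..t, y s :=
      intervalIntegral.integral_nonneg htτ.1 (fun s hs => hy0 s (hIccτ ⟨hs.1, le_trans hs.2 htτ.2⟩))
    have h2 : 0 ≤ c * ∫ s in (0:ℝ)..t, y s := mul_nonneg (le_of_lt hc0) this
    linarith [Real.add_one_le_exp (c * ∫ s in (0:ℝ)..t, y s)]
  have hM1 : 1 ≤ M := hg1 τ ⟨hτ0, le_refl τ⟩
  have hcd0 : 0 ≤ c / (d.factorial : ℝ) := by positivity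
  have hiter : ∀ p t, blasiusIter d (p+1) t
      = Real.exp ((c / (d.factorial : ℝ)) * ∫ s in (0:ℝ)..t, (t - s)^d * blasiusIter d p s) := by
    intro p t
    rw [hc2]
    rfl
  have hintf : ∀ p t, t ∈ Set.Icc (0:ℝ) τ →
      IntervalIntegrable (fun s => (t - s)^d * blasiusIter d p s) volume 0 t :=
    fun p t _ => (((continuous_const.sub continuous_id).pow d).mul
      (blasiusIter_continuous d p)).intervalIntegrable 0 t
  have hintg : ∀ t ∈ Set.Icc (0:ℝ) τ,
      IntervalIntegrable (fun s => (t - s)^d * g s) volume 0 t := by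
    intro t htτ
    apply ContinuousOn.intervalIntegrable_of_Icc htτ.1
    exact ((continuous_const.sub continuous_id).pow d).continuousOn.mul
      (hgcont.mono (fun x hx => hIccτ ⟨hx.1, le_trans hx.2 htτ.2⟩))
  have hle : ∀ p, ∀ t ∈ Set.Icc (0:ℝ) τ, blasiusIter d p t ≤ g t := by
    intro p
    induction p with
    | zero => exact fun t htτ => hg1 t htτ
    | succ p ih =>
      intro t htτ
      rw [hiter, hfix t (hIccτ htτ)]
      apply Real.exp_le_exp.2
      apply mul_le_mul_of_nonneg_left _ hcd0
      apply intervalIntegral.integral_mono_on htτ.1 (hintf p t htτ) (hintg t htτ)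
      intro s hs
      have hsτ : s ∈ Set.Icc (0:ℝ) τ := ⟨hs.1, le_trans hs.2 htτ.2⟩
      exact mul_le_mul_of_nonneg_left (ih s hsτ) (pow_nonneg (by linarith [hs.2]) d)
  set K : ℝ := M * (c / (d.factorial : ℝ)) * τ^d with hK
  have hK0 : 0 ≤ K := by
    apply mul_nonneg (mul_nonneg (by linarith) hcd0) (pow_nonneg hτ0 d)
  have herr : ∀ p, ∀ t ∈ Set.Icc (0:ℝ) τ,
      g t - blasiusIter d p t ≤ (M - 1) * (K^p * t^p / (p.factorial : ℝ)) := by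
    intro p
    induction p with
    | zero =>
      intro t htτ
      have := hgM t htτ
      simp only [pow_zero, Nat.factorial_zero, Nat.cast_one, blasiusIter]
      rw [show (M-1) * (1 * 1 / 1) = M - 1 by ring]
      have h1 : blasiusIter d 0 t = 1 := rfl
      linarith [hgM t htτ]
    | succ p ih =>
      intro t htτ
      set F : ℝ := ∫ s in (0:ℝ)..t, (t - s)^d * blasiusIter d p s with hF
      set G : ℝ := ∫ s in (0:ℝ)..t, (t - s)^d * g s with hG
      set c' : ℝ := c / (d.factorial : ℝ) with hc'
      have hFG : F ≤ G := by
        apply intervalIntegral.integral_mono_on htτ.1 (hintf p t htτ) (hintg t htτ)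
        intro s hs
        exact mul_le_mul_of_nonneg_left (hle p s ⟨hs.1, le_trans hs.2 htτ.2⟩)
          (pow_nonneg (by linarith [hs.2]) d)
      have hexp_lip : Real.exp (c' * G) - Real.exp (c' * F)
          ≤ Real.exp (c' * G) * (c' * G - c' * F) := by
        have h1 := Real.add_one_le_exp (c' * F - c' * G)
        have h2 : Real.exp (c' * F) = Real.exp (c' * G) * Real.exp (c' * F - c' * G) := by
          rw [← Real.exp_add]; ring_nf
        nlinarith [Real.exp_pos (c' * G), Real.exp_pos (c' * F)]
      have hGF : G - F ≤ τ^d * ((M - 1) * (K^p * t^(p+1) / ((p+1) * (p.factorial : ℝ)))) := by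
        rw [hG, hF, ← intervalIntegral.integral_sub (hintg t htτ) (hintf p t htτ)]
        have hbd : ∀ s ∈ Set.Icc (0:ℝ) t,
            (t - s)^d * g s - (t - s)^d * blasiusIter d p s
              ≤ τ^d * ((M - 1) * (K^p * s^p / (p.factorial : ℝ))) := by
          intro s hs
          have hsτ : s ∈ Set.Icc (0:ℝ) τ := ⟨hs.1, le_trans hs.2 htτ.2⟩
          have h1 : (t - s)^d * g s - (t - s)^d * blasiusIter d p s
              = (t - s)^d * (g s - blasiusIter d p s) := by ring
          rw [h1]
          have hts : (0:ℝ) ≤ t - s := by linarith [hs.2]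
          have htsτ : (t - s)^d ≤ τ^d := by
            apply pow_le_pow_left₀ hts
            linarith [hs.1, htτ.2]
          have hnn : 0 ≤ g s - blasiusIter d p s := sub_nonneg.2 (hle p s hsτ)
          calc (t - s)^d * (g s - blasiusIter d p s)
              ≤ τ^d * (g s - blasiusIter d p s) := mul_le_mul_of_nonneg_right htsτ hnn
            _ ≤ τ^d * ((M - 1) * (K^p * s^p / (p.factorial : ℝ))) :=
                mul_le_mul_of_nonneg_left (ih s hsτ) (pow_nonneg hτ0 d)
        have hintlhs : IntervalIntegrable
            (fun s => (t - s)^d * g s - (t - s)^d * blasiusIter d p s) volume 0 t :=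
          (hintg t htτ).sub (hintf p t htτ)
        have hintrhs : IntervalIntegrable
            (fun s => τ^d * ((M - 1) * (K^p * s^p / (p.factorial : ℝ)))) volume 0 t := by
          exact (continuous_const.mul (continuous_const.mul
            ((continuous_const.mul (continuous_pow p)).div_const _))).intervalIntegrable 0 t
        have := intervalIntegral.integral_mono_on htτ.1 hintlhs hintrhs hbd
        refine le_trans this ?_
        have hconst : (fun s : ℝ => τ^d * ((M - 1) * (K^p * s^p / (p.factorial : ℝ))))
            = fun s : ℝ => (τ^d * ((M - 1) * K^p / (p.factorial : ℝ))) * s^p := by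
          funext s; ring
        rw [hconst, intervalIntegral.integral_const_mul, integral_pow]
        rw [show ((0:ℝ)) ^ (p+1) = 0 by simp]
        have : ((p:ℝ) + 1) ≠ 0 := by positivity
        field_simp
        ring_nf
        apply le_of_eq
        push_cast
        ring
      -- assemble
      rw [hiter, hfix t (hIccτ htτ)]
      have hexpG : Real.exp (c' * G) = g t := (hfix t (hIccτ htτ)).symm
      have hgtM : Real.exp (c' * G) ≤ M := by rw [hexpG]; exact hgM t htτ
      have hstep : Real.exp (c' * G) - Real.exp (c' * F) ≤ M * (c' * (G - F)) := by
        have h2 : c' * G - c' * F = c' * (G - F) := by ring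
        have h3 : 0 ≤ c' * (G - F) := mul_nonneg hcd0 (by linarith)
        calc Real.exp (c' * G) - Real.exp (c' * F)
            ≤ Real.exp (c' * G) * (c' * G - c' * F) := hexp_lip
          _ = Real.exp (c' * G) * (c' * (G - F)) := by rw [h2]
          _ ≤ M * (c' * (G - F)) := mul_le_mul_of_nonneg_right hgtM h3
      refine le_trans hstep ?_
      have hfin : M * (c' * (τ^d * ((M - 1) * (K^p * t^(p+1) / ((p+1) * (p.factorial : ℝ))))))
          = (M - 1) * (K^(p+1) * t^(p+1) / ((p+1).factorial : ℝ)) := by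
        rw [hK, hc']
        rw [Nat.factorial_succ]
        push_cast
        have h1 : ((p.factorial : ℝ)) ≠ 0 := Nat.cast_ne_zero.2 (Nat.factorial_ne_zero p)
        have h2 : ((d.factorial : ℝ)) ≠ 0 := Nat.cast_ne_zero.2 (Nat.factorial_ne_zero d)
        field_simp
        ring_nf
        simp [h2]
      rw [← hfin]
      have hM0 : 0 ≤ M := by linarith
      have h4 : c' * (G - F) ≤ c' * (τ^d * ((M - 1) * (K^p * t^(p+1) / ((p+1) * (p.factorial : ℝ))))) :=
        mul_le_mul_of_nonneg_left hGF hcd0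
      exact mul_le_mul_of_nonneg_left h4 hM0
  -- conclusion
  have hconc : TendstoUniformlyOn (fun p => blasiusIter d p) g atTop (Set.Icc 0 τ) := by
    rw [Metric.tendstoUniformlyOn_iff]
    intro ε hε
    have hlim : Tendsto (fun p : ℕ => (M - 1) * ((K * τ)^p / (p.factorial : ℝ))) atTop (nhds 0) := by
      have h1 := FloorSemiring.tendsto_pow_div_factorial_atTop (K * τ)
      have h2 := h1.const_mul (M - 1)
      simpa using h2
    have hev : ∀ᶠ p in atTop, (M - 1) * ((K * τ)^p / (p.factorial : ℝ)) < ε :=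
      hlim.eventually_lt_const hε
    filter_upwards [hev] with p hp t htτ
    have h1 := herr p t htτ
    have h2 := hle p t htτ
    rw [Real.dist_eq, abs_of_nonneg (by linarith : (0:ℝ) ≤ g t - blasiusIter d p t)]
    have h3 : K^p * t^p ≤ (K * τ)^p := by
      calc K^p * t^p ≤ K^p * τ^p :=
            mul_le_mul_of_nonneg_left (pow_le_pow_left₀ htτ.1 htτ.2 p) (pow_nonneg hK0 p)
        _ = (K * τ)^p := (mul_pow K τ p).symm
    have hfp : (0:ℝ) < (p.factorial : ℝ) := by positivity
    have h4 : (M - 1) * (K^p * t^p / (p.factorial : ℝ))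
        ≤ (M - 1) * ((K * τ)^p / (p.factorial : ℝ)) := by
      apply mul_le_mul_of_nonneg_left _ (by linarith : (0:ℝ) ≤ M - 1)
      gcongr
    linarith
  exact hconc
end

section
/- Given any array of points (x_i^h)_{i,h≥1} in T_n^d, for every p ∈ ℕ one has B^p(k) ⊆ B^{p+1}(k) ⊆ B^*(k) for all k ∈ ℕ; in particular, H_i^{p+1} ≤ H_i^{p+2} ≤ H_i^* for all i ≥ 1. -/
open MeasureTheory ProbabilityTheory Filter

/-- The discrete torus graph on `(ℤ/nℤ)^d`. -/
def torusGraph (d n : ℕ) : SimpleGraph (Fin d → ZMod n) where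
  Adj x y := x ≠ y ∧ ∃ i, (x i = y i + 1 ∨ y i = x i + 1) ∧ ∀ j, j ≠ i → x j = y j
  symm := ⟨by
    rintro x y ⟨hne, i, hor, hj⟩
    exact ⟨hne.symm, i, hor.symm, fun j hji => (hj j hji).symm⟩⟩
  loopless := ⟨by rintro x ⟨hne, -⟩; exact hne rfl⟩

/-- Closed ball of radius `r` around `x` in the graph metric of the torus. -/
def torusBall (d n : ℕ) (x : Fin d → ZMod n) (r : ℕ) : Set (Fin d → ZMod n) :=
  {y | (torusGraph d n).dist x y ≤ r}

/-- `burnedSet d n x k = ⋃_{i=1}^k B̄(x_i, k−i)`, with the `0`-indexed convention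
`x i = x_{i+1}`. -/
def burnedSet (d n : ℕ) (x : ℕ → (Fin d → ZMod n)) (k : ℕ) : Set (Fin d → ZMod n) :=
  ⋃ i ∈ Finset.range k, torusBall d n (x i) (k - 1 - i)

/-- The burning number of the torus. -/
noncomputable def burningNumber (d n : ℕ) : ℕ :=
  sInf {k | 1 ≤ k ∧ ∃ x : ℕ → (Fin d → ZMod n), burnedSet d n x k = Set.univ}

/-- The first time at which the burning process covers the whole torus. -/
noncomputable def burnTime (d n : ℕ) (x : ℕ → (Fin d → ZMod n)) : ℕ :=
  sInf {k | burnedSet d n x k = Set.univ}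

open Classical in
/-- The intermediate burning processes `B^p(·)` constructed from the array `xs`
(`xs i h` stands for `x_{i+1}^{h+1}`): `B^0(k) = ∅` and `B^{p+1}(k) = ⋃_{i=1}^k
B̄(y_i^{p+1}, k−i)`, where `y_i^{p+1}` is the first point of `(x_i^h)_h` lying outside
`B^p(i−1)` (and `x_i^1` if there is none). -/
noncomputable def interB (d n : ℕ) (xs : ℕ → ℕ → (Fin d → ZMod n)) :
    ℕ → ℕ → Set (Fin d → ZMod n)
  | 0, _ => ∅
  | (p + 1), k =>
      ⋃ i ∈ Finset.range k,
        torusBall d n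
          (if h : ∃ m : ℕ, xs i m ∉ interB d n xs p i then xs i (Nat.find h) else xs i 0)
          (k - 1 - i)

open Classical in
/-- `interH d n xs p i` is `H_{i+1}^{p+1} = inf{h ≥ 1 : x_{i+1}^h ∉ B^p(i)} ∈ ℕ∞`,
recorded `0`-indexed (so `interH d n xs p i = h₀` corresponds to `H_{i+1}^{p+1} = h₀+1`). -/
noncomputable def interH (d n : ℕ) (xs : ℕ → ℕ → (Fin d → ZMod n)) (p i : ℕ) : ℕ∞ :=
  if h : ∃ m : ℕ, xs i m ∉ interB d n xs p i then (Nat.find h : ℕ∞) else ⊤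

open Classical in
/-- Auxiliary construction for the rejection-sampling process: `starYaux d n xs (k+1)`
agrees with `starYaux d n xs k` below index `k` and chooses `y_{k+1}^*` at index `k`. -/
noncomputable def starYaux (d n : ℕ) (xs : ℕ → ℕ → (Fin d → ZMod n)) :
    ℕ → ℕ → (Fin d → ZMod n)
  | 0, i => xs i 0
  | (k + 1), i =>
      if i = k then
        (if h : ∃ m : ℕ,
            xs k m ∉ ⋃ j ∈ Finset.range k, torusBall d n (starYaux d n xs k j) (k - 1 - j)
          then xs k (Nat.find h) else xs k 0)
      else starYaux d n xs k i

/-- `starY d n xs i` is the point `y_{i+1}^*` of the rejection-sampling process. -/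
noncomputable def starY (d n : ℕ) (xs : ℕ → ℕ → (Fin d → ZMod n)) (i : ℕ) :
    Fin d → ZMod n :=
  starYaux d n xs (i + 1) i

/-- The rejection-sampling burning process `B^*(k) = ⋃_{i=1}^k B̄(y_i^*, k−i)`. -/
noncomputable def starB (d n : ℕ) (xs : ℕ → ℕ → (Fin d → ZMod n)) (k : ℕ) :
    Set (Fin d → ZMod n) :=
  ⋃ i ∈ Finset.range k, torusBall d n (starY d n xs i) (k - 1 - i)

open Classical in
/-- `starH d n xs i` is `H_{i+1}^* = inf{h ≥ 1 : x_{i+1}^h ∉ B^*(i)} ∈ ℕ∞`, recorded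
`0`-indexed. -/
noncomputable def starH (d n : ℕ) (xs : ℕ → ℕ → (Fin d → ZMod n)) (i : ℕ) : ℕ∞ :=
  if h : ∃ m : ℕ, xs i m ∉ starB d n xs i then (Nat.find h : ℕ∞) else ⊤

section Aux

variable {d n : ℕ}

lemma torus_adj_update (x : Fin d → ZMod n) (i : Fin d) (h : x i + 1 ≠ x i) :
    (torusGraph d n).Adj x (Function.update x i (x i + 1)) := by
  refine ⟨?_, i, Or.inr (by simp), fun j hj => by simp [Function.update_of_ne hj]⟩
  intro he
  have := congrFun he i
  rw [Function.update_self] at this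
  exact h this.symm

lemma torus_reach_add (x : Fin d → ZMod n) (i : Fin d) (k : ℕ) :
    (torusGraph d n).Reachable x (Function.update x i (x i + (k : ZMod n))) := by
  induction k with
  | zero => simpa using SimpleGraph.Reachable.refl x
  | succ k IH =>
    by_cases hc : (x i + (k : ZMod n)) + 1 = x i + (k : ZMod n)
    · have : Function.update x i (x i + ((k+1 : ℕ) : ZMod n)) =
        Function.update x i (x i + (k : ZMod n)) := by
        rw [show ((k+1 : ℕ) : ZMod n) = (k : ZMod n) + 1 by push_cast; ring, ← add_assoc, hc]
      rw [this]; exact IH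
    · refine IH.trans ?_
      set z := Function.update x i (x i + (k : ZMod n)) with hz
      have hzadj := torus_adj_update z i (by rw [hz]; simpa using hc)
      have heq : Function.update z i (z i + 1) =
          Function.update x i (x i + ((k+1 : ℕ) : ZMod n)) := by
        rw [hz]
        funext j
        by_cases hj : j = i
        · subst hj; simp; push_cast; ring
        · simp [Function.update_of_ne hj]
      rw [heq] at hzadj
      exact hzadj.reachable

lemma torus_reach_update [NeZero n] (x : Fin d → ZMod n) (i : Fin d) (c : ZMod n) :
    (torusGraph d n).Reachable x (Function.update x i c) := by
  have : c = x i + (((c - x i).val : ℕ) : ZMod n) := by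
    rw [ZMod.natCast_val, ZMod.cast_id]; ring
  rw [this]
  exact torus_reach_add x i _

lemma torus_connected (hn : 1 ≤ n) : (torusGraph d n).Connected := by
  haveI : NeZero n := ⟨by omega⟩
  classical
  have key : ∀ m : ℕ, ∀ x y : Fin d → ZMod n,
      (Finset.univ.filter fun i => x i ≠ y i).card ≤ m →
      (torusGraph d n).Reachable x y := by
    intro m
    induction m with
    | zero =>
      intro x y hcard
      have : ∀ i, x i = y i := by
        intro i
        by_contra hne
        have : i ∈ Finset.univ.filter fun i => x i ≠ y i := by simp [hne]
        have := Finset.card_pos.mpr ⟨i, this⟩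
        omega
      exact (funext this : x = y) ▸ SimpleGraph.Reachable.refl x
    | succ m IH =>
      intro x y hcard
      by_cases hxy : ∃ i, x i ≠ y i
      · obtain ⟨i, hi⟩ := hxy
        set x' := Function.update x i (y i) with hx'
        have h1 : (torusGraph d n).Reachable x x' := torus_reach_update x i (y i)
        refine h1.trans (IH x' y ?_)
        have hsub : (Finset.univ.filter fun j => x' j ≠ y j) ⊆
            (Finset.univ.filter fun j => x j ≠ y j) \ {i} := by
          intro j hj
          simp only [Finset.mem_filter, Finset.mem_univ, true_and] at hj
          by_cases hji : j = i
          · subst hji; simp [hx'] at hj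
          · simp only [Finset.mem_sdiff, Finset.mem_filter, Finset.mem_univ, true_and,
              Finset.mem_singleton]
            rw [hx', Function.update_of_ne hji] at hj
            exact ⟨hj, hji⟩
        have hmem : i ∈ Finset.univ.filter fun j => x j ≠ y j := by simp [hi]
        have := Finset.card_le_card hsub
        rw [Finset.card_sdiff_of_subset (by simpa using hmem)] at this
        simp only [Finset.card_singleton] at this
        have hpos : 1 ≤ (Finset.univ.filter fun j => x j ≠ y j).card :=
          Finset.card_pos.mpr ⟨i, hmem⟩
        omega
      · push_neg at hxy
        exact (funext hxy : x = y) ▸ SimpleGraph.Reachable.refl x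
  constructor
  intro x y; exact key _ x y le_rfl

/-- ball triangle absorption lemma -/
lemma torus_absorb (hn : 1 ≤ n) (y z : ℕ → (Fin d → ZMod n)) (k : ℕ)
    (hyp : ∀ i < k,
      y i ∈ (⋃ j ∈ Finset.range i, torusBall d n (y j) (i - 1 - j)) ∨
      y i ∈ (⋃ j ∈ Finset.range i, torusBall d n (z j) (i - 1 - j)) ∨ y i = z i) :
    (⋃ i ∈ Finset.range k, torusBall d n (y i) (k - 1 - i)) ⊆
      (⋃ i ∈ Finset.range k, torusBall d n (z i) (k - 1 - i)) := by
  have hconn := torus_connected (d := d) hn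
  intro w hw
  simp only [Set.mem_iUnion, Finset.mem_range, exists_prop] at hw ⊢
  obtain ⟨i, hik, hwi⟩ := hw
  induction i using Nat.strong_induction_on with
  | _ i IH =>
    rcases hyp i hik with hy | hz | heq
    · simp only [Set.mem_iUnion, Finset.mem_range, exists_prop] at hy
      obtain ⟨j, hji, hyj⟩ := hy
      refine IH j hji (lt_trans hji hik) ?_
      have h1 : (torusGraph d n).dist (y j) (y i) ≤ i - 1 - j := hyj
      have h2 : (torusGraph d n).dist (y i) w ≤ k - 1 - i := hwi
      have h3 := hconn.dist_triangle (u := y j) (v := y i) (w := w)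
      show (torusGraph d n).dist (y j) w ≤ k - 1 - j
      omega
    · simp only [Set.mem_iUnion, Finset.mem_range, exists_prop] at hz
      obtain ⟨j, hji, hzj⟩ := hz
      refine ⟨j, lt_trans hji hik, ?_⟩
      have h1 : (torusGraph d n).dist (z j) (y i) ≤ i - 1 - j := hzj
      have h2 : (torusGraph d n).dist (y i) w ≤ k - 1 - i := hwi
      have h3 := hconn.dist_triangle (u := z j) (v := y i) (w := w)
      show (torusGraph d n).dist (z j) w ≤ k - 1 - j
      omega
    · exact ⟨i, hik, heq ▸ hwi⟩

open Classical in
lemma centerKey (f : ℕ → (Fin d → ZMod n)) (A B : Set (Fin d → ZMod n)) (hAB : A ⊆ B) :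
    (if h : ∃ m, f m ∉ A then f (Nat.find h) else f 0) ∈ B ∨
    (if h : ∃ m, f m ∉ A then f (Nat.find h) else f 0) =
      (if h : ∃ m, f m ∉ B then f (Nat.find h) else f 0) := by
  by_cases hB : ∃ m, f m ∉ B
  · have hA : ∃ m, f m ∉ A := ⟨hB.choose, fun hc => hB.choose_spec (hAB hc)⟩
    rw [dif_pos hA, dif_pos hB]
    by_cases hmem : f (Nat.find hA) ∈ B
    · exact Or.inl hmem
    · right
      have h1 : Nat.find hB ≤ Nat.find hA := Nat.find_min' hB hmem
      have h2 : Nat.find hA ≤ Nat.find hB :=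
        Nat.find_min' hA (fun hc => Nat.find_spec hB (hAB hc))
      rw [le_antisymm h2 h1]
  · push_neg at hB
    left
    split_ifs with hA
    · exact hB _
    · exact hB 0

open Classical in
lemma Hdite_mono (f : ℕ → (Fin d → ZMod n)) (A B : Set (Fin d → ZMod n)) (hAB : A ⊆ B) :
    (if h : ∃ m, f m ∉ A then (Nat.find h : ℕ∞) else ⊤) ≤
      (if h : ∃ m, f m ∉ B then (Nat.find h : ℕ∞) else ⊤) := by
  by_cases hB : ∃ m, f m ∉ B
  · have hA : ∃ m, f m ∉ A := ⟨hB.choose, fun hc => hB.choose_spec (hAB hc)⟩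
    rw [dif_pos hA, dif_pos hB]
    have : Nat.find hA ≤ Nat.find hB :=
      Nat.find_min' hA (fun hc => Nat.find_spec hB (hAB hc))
    exact_mod_cast this
  · rw [dif_neg hB]; exact le_top

open Classical in
/-- The centers of `interB (p+1)`. -/
noncomputable def interC (d n : ℕ) (xs : ℕ → ℕ → (Fin d → ZMod n)) (p i : ℕ) :
    Fin d → ZMod n :=
  if h : ∃ m : ℕ, xs i m ∉ interB d n xs p i then xs i (Nat.find h) else xs i 0

lemma interB_succ (xs : ℕ → ℕ → (Fin d → ZMod n)) (p k : ℕ) :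
    interB d n xs (p + 1) k =
      ⋃ i ∈ Finset.range k, torusBall d n (interC d n xs p i) (k - 1 - i) := rfl

lemma starYaux_stable (xs : ℕ → ℕ → (Fin d → ZMod n)) :
    ∀ k i, i < k → starYaux d n xs k i = starY d n xs i := by
  intro k
  induction k with
  | zero => omega
  | succ k IH =>
    intro i hi
    by_cases hik : i = k
    · subst hik; rfl
    · have h2 : starYaux d n xs (k + 1) i = starYaux d n xs k i := by
        simp only [starYaux, if_neg hik]
      rw [h2, IH i (by omega)]

lemma starB_eq_aux (xs : ℕ → ℕ → (Fin d → ZMod n)) (k : ℕ) :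
    starB d n xs k = ⋃ j ∈ Finset.range k, torusBall d n (starYaux d n xs k j) (k - 1 - j) := by
  unfold starB
  ext w
  simp only [Set.mem_iUnion, Finset.mem_range, exists_prop]
  constructor
  · rintro ⟨j, hj, hw⟩
    exact ⟨j, hj, by rwa [starYaux_stable xs k j hj]⟩
  · rintro ⟨j, hj, hw⟩
    exact ⟨j, hj, by rwa [starYaux_stable xs k j hj] at hw⟩

open Classical in
lemma starY_eq (xs : ℕ → ℕ → (Fin d → ZMod n)) (i : ℕ) :
    starY d n xs i =
      (if h : ∃ m, xs i m ∉ starB d n xs i then xs i (Nat.find h) else xs i 0) := by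
  show starYaux d n xs (i + 1) i = _
  simp only [starYaux, if_true]
  rw [← starB_eq_aux xs i]

end Aux

/-- For any array of points `(x_i^h)` of the torus and every `p`,
`B^p(k) ⊆ B^{p+1}(k) ⊆ B^*(k)` for all `k`; in particular
`H_i^{p+1} ≤ H_i^{p+2} ≤ H_i^*` for all `i`. -/
theorem interB_subset_starB (d n : ℕ) (hd : 1 ≤ d) (hn : 1 ≤ n)
    (xs : ℕ → ℕ → (Fin d → ZMod n)) :
    ∀ p : ℕ,
      (∀ k : ℕ, interB d n xs p k ⊆ interB d n xs (p + 1) k ∧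
        interB d n xs (p + 1) k ⊆ starB d n xs k) ∧
      (∀ i : ℕ, interH d n xs p i ≤ interH d n xs (p + 1) i ∧
        interH d n xs (p + 1) i ≤ starH d n xs i) := by
  classical
  have hSets : ∀ p : ℕ, ∀ k : ℕ, interB d n xs p k ⊆ interB d n xs (p + 1) k ∧
      interB d n xs (p + 1) k ⊆ starB d n xs k := by
    intro p
    induction p with
    | zero =>
      intro k
      constructor
      · show (∅ : Set (Fin d → ZMod n)) ⊆ _
        exact Set.empty_subset _
      · rw [interB_succ]
        show _ ⊆ ⋃ i ∈ Finset.range k, torusBall d n (starY d n xs i) (k - 1 - i)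
        apply torus_absorb hn
        intro i _
        have hAB : interB d n xs 0 i ⊆ starB d n xs i := Set.empty_subset _
        rcases centerKey (xs i) (interB d n xs 0 i) (starB d n xs i) hAB with hmem | heq
        · exact Or.inr (Or.inl hmem)
        · exact Or.inr (Or.inr (heq.trans (starY_eq xs i).symm))
    | succ p IH =>
      intro k
      constructor
      · rw [interB_succ, interB_succ]
        apply torus_absorb hn
        intro i _
        rcases centerKey (xs i) (interB d n xs p i) (interB d n xs (p + 1) i)
            (IH i).1 with hmem | heq
        · exact Or.inl (by rw [← interB_succ]; exact hmem)
        · exact Or.inr (Or.inr heq)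
      · rw [interB_succ]
        show _ ⊆ ⋃ i ∈ Finset.range k, torusBall d n (starY d n xs i) (k - 1 - i)
        apply torus_absorb hn
        intro i _
        have hAB : interB d n xs (p + 1) i ⊆ starB d n xs i := (IH i).2
        rcases centerKey (xs i) (interB d n xs (p + 1) i) (starB d n xs i) hAB
          with hmem | heq
        · exact Or.inr (Or.inl hmem)
        · exact Or.inr (Or.inr (heq.trans (starY_eq xs i).symm))
  intro p
  refine ⟨hSets p, fun i => ⟨?_, ?_⟩⟩
  · show (if h : ∃ m, xs i m ∉ interB d n xs p i then (Nat.find h : ℕ∞) else ⊤) ≤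
      (if h : ∃ m, xs i m ∉ interB d n xs (p + 1) i then (Nat.find h : ℕ∞) else ⊤)
    exact Hdite_mono (xs i) _ _ (hSets p i).1
  · show (if h : ∃ m, xs i m ∉ interB d n xs (p + 1) i then (Nat.find h : ℕ∞) else ⊤) ≤
      (if h : ∃ m, xs i m ∉ starB d n xs i then (Nat.find h : ℕ∞) else ⊤)
    exact Hdite_mono (xs i) _ _ (hSets p i).2
end
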